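/- arXiv:2208.12583 — 2 statements merged into one kernel-verified Lean document; each statement's English description precedes it below -/
import Mathlib

section
/- For all integers 1 ≤ p, q ≤ N, the matrix identity C* C = S(p,q) holds, where C* denotes the conjugate transpose of C. In particular, C* C is a real symmetric matrix. -/
open Matrix Complex

/-- The matrix `C` with entries `C_{j,k} = exp(-2πi (j-(p+1)/2)(k-(q+1)/2)/N)` for
1-based `j, k`; with the 0-based indices used here the entry is
`exp(-2πi (j-(p-1)/2)(k-(q-1)/2)/N)`. -/
noncomputable def symC (N p q : ℕ) : Matrix (Fin p) (Fin q) ℂ :=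
  fun j k => Complex.exp (-(2 * (Real.pi : ℂ) * Complex.I) *
    (((j : ℕ) : ℂ) - ((p : ℂ) - 1) / 2) * (((k : ℕ) : ℂ) - ((q : ℂ) - 1) / 2) / (N : ℂ))

/-- The periodic prolate matrix `S(p,q) ∈ ℝ^{q×q}` with entries
`sin(pπ(j-k)/N)/sin(π(j-k)/N)` off the diagonal and `p` on the diagonal. -/
noncomputable def prolateS (N p q : ℕ) : Matrix (Fin q) (Fin q) ℝ :=
  fun j k => if j = k then (p : ℝ)
    else Real.sin ((p : ℝ) * Real.pi * (((j : ℕ) : ℝ) - ((k : ℕ) : ℝ)) / N) /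
         Real.sin (Real.pi * (((j : ℕ) : ℝ) - ((k : ℕ) : ℝ)) / N)

private lemma mySinEq (u : ℂ) :
    Complex.sin u = (Complex.exp (2*u*I) - 1) * Complex.exp (-(u*I)) / (2*I) := by
  have h := Complex.exp_ne_zero (u*I)
  have h2 : Complex.exp (2*u*I) = Complex.exp (u*I) ^ 2 := by
    rw [← Complex.exp_nat_mul]; ring_nf
  have h3 : Complex.exp (-(u*I)) = (Complex.exp (u*I))⁻¹ := Complex.exp_neg _
  rw [Complex.sin, neg_mul, h2, h3]
  field_simp
  linear_combination (1 - Complex.exp (u*I)^2) * Complex.I_sq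

private lemma myKey (p : ℕ) (w : ℂ) (hw : Complex.sin w ≠ 0) :
    ∑ m : Fin p, Complex.exp (2 * w * I * (((m : ℕ) : ℂ) - ((p : ℂ) - 1) / 2)) =
      Complex.sin ((p : ℂ) * w) / Complex.sin w := by
  rw [eq_div_iff hw]
  have hterm : ∀ m : Fin p, Complex.exp (2 * w * I * (((m : ℕ) : ℂ) - ((p : ℂ) - 1) / 2))
      = Complex.exp (2 * w * I) ^ (m : ℕ) * Complex.exp (-(w * I * ((p : ℂ) - 1))) := by
    intro m
    rw [← Complex.exp_nat_mul, ← Complex.exp_add]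
    congr 1
    ring
  simp only [hterm, ← Finset.sum_mul]
  rw [Fin.sum_univ_eq_sum_range (fun m => Complex.exp (2 * w * I) ^ m)]
  rw [mySinEq w, mySinEq ((p:ℂ)*w)]
  have hg := geom_sum_mul (Complex.exp (2 * w * I)) p
  have hzp : Complex.exp (2 * w * I) ^ p = Complex.exp (2 * ((p:ℂ) * w) * I) := by
    rw [← Complex.exp_nat_mul]; ring_nf
  have hne : (2 * I : ℂ) ≠ 0 := by simp [Complex.I_ne_zero]
  field_simp
  calc (∑ i ∈ Finset.range p, Complex.exp (2 * w * I) ^ i) *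
        Complex.exp (-(w * I * ((p : ℂ) - 1))) * (Complex.exp (2 * w * I) - 1) *
        Complex.exp (-(w * I))
      = ((∑ i ∈ Finset.range p, Complex.exp (2 * w * I) ^ i) * (Complex.exp (2 * w * I) - 1)) *
        (Complex.exp (-(w * I * ((p : ℂ) - 1))) * Complex.exp (-(w * I))) := by ring
    _ = (Complex.exp (2 * ((p:ℂ) * w) * I) - 1) * Complex.exp (-((p:ℂ) * w * I)) := by
        rw [hg, hzp, ← Complex.exp_add]; congr 1; ring
    _ = (Complex.exp (2 * w * I * (p:ℂ)) - 1) * Complex.exp (-(w * I * (p:ℂ))) := by ring_nf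

theorem conjTranspose_symC_mul_symC
    (N p q : ℕ) (hN : 0 < N) (hp1 : 1 ≤ p) (hpN : p ≤ N) (hq1 : 1 ≤ q) (hqN : q ≤ N) :
    (symC N p q)ᴴ * symC N p q = (prolateS N p q).map (Complex.ofReal) ∧
    ((symC N p q)ᴴ * symC N p q).IsHermitian ∧
    ∀ j k, ((symC N p q)ᴴ * symC N p q) j k ∈ Set.range (Complex.ofReal) := by
  have hNR : (N : ℝ) ≠ 0 := Nat.cast_ne_zero.mpr hN.ne'
  have hmain : (symC N p q)ᴴ * symC N p q = (prolateS N p q).map (Complex.ofReal) := by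
    ext j k
    rw [Matrix.mul_apply, Matrix.map_apply]
    set x : ℝ := Real.pi * (((j : ℕ) : ℝ) - ((k : ℕ) : ℝ)) / N with hx
    have hterm : ∀ m : Fin p,
        ((symC N p q)ᴴ) j m * symC N p q m k
          = Complex.exp (2 * ((x : ℝ) : ℂ) * I * (((m : ℕ) : ℂ) - ((p : ℂ) - 1) / 2)) := by
      intro m
      simp only [Matrix.conjTranspose_apply, symC, Complex.star_def]
      rw [← Complex.exp_conj, ← Complex.exp_add]
      congr 1
      have : (starRingEnd ℂ) (-(2 * (Real.pi : ℂ) * Complex.I) *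
          (((m : ℕ) : ℂ) - ((p : ℂ) - 1) / 2) * (((j : ℕ) : ℂ) - ((q : ℂ) - 1) / 2) / (N : ℂ))
          = (2 * (Real.pi : ℂ) * Complex.I) *
          (((m : ℕ) : ℂ) - ((p : ℂ) - 1) / 2) * (((j : ℕ) : ℂ) - ((q : ℂ) - 1) / 2) / (N : ℂ) := by
        simp [_root_.map_mul, map_div₀, _root_.map_sub, map_neg, map_ofNat, _root_.map_one,
          map_natCast, Complex.conj_I, Complex.conj_ofReal]
      rw [this, hx]
      push_cast
      ring
    rcases eq_or_ne j k with rfl | hjk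
    · simp only [hterm]
      have hx0 : x = 0 := by simp [hx]
      simp [hx0, prolateS]
    · have hd : ((j : ℕ) : ℝ) - ((k : ℕ) : ℝ) ≠ 0 := by
        intro h
        apply hjk
        have : ((j : ℕ) : ℝ) = ((k : ℕ) : ℝ) := by linarith
        exact Fin.ext (Nat.cast_injective this)
      have hjN : ((j : ℕ) : ℝ) < N := by exact_mod_cast lt_of_lt_of_le j.isLt hqN
      have hkN : ((k : ℕ) : ℝ) < N := by exact_mod_cast lt_of_lt_of_le k.isLt hqN
      have hj0 : (0:ℝ) ≤ ((j : ℕ) : ℝ) := Nat.cast_nonneg _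
      have hk0 : (0:ℝ) ≤ ((k : ℕ) : ℝ) := Nat.cast_nonneg _
      have hNpos : (0:ℝ) < N := Nat.cast_pos.mpr hN
      have hsin : Real.sin x ≠ 0 := by
        intro h
        obtain ⟨n, hn⟩ := Real.sin_eq_zero_iff.mp h
        rw [hx] at hn
        have hπ := Real.pi_ne_zero
        have hnd : (n:ℝ) * N = ((j : ℕ) : ℝ) - ((k : ℕ) : ℝ) := by
          field_simp at hn
          apply mul_left_cancel₀ hπ
          rw [hn]
        have habs : |((j:ℕ):ℝ) - ((k:ℕ):ℝ)| < N :=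
          abs_sub_lt_iff.mpr ⟨by linarith, by linarith⟩
        rw [← hnd, abs_mul, abs_of_pos hNpos] at habs
        have hn1 : |(n:ℝ)| < 1 := by
          by_contra hcon
          push_neg at hcon
          nlinarith
        have hn0 : n = 0 := by
          have h2 : |n| < 1 := by exact_mod_cast hn1
          exact Int.abs_lt_one_iff.mp h2
        rw [hn0] at hnd
        simp at hnd
        exact hd (by linarith)
      have hcsin : Complex.sin ((x:ℝ):ℂ) ≠ 0 := by
        rw [← Complex.ofReal_sin]
        exact_mod_cast hsin
      have harg : (p:ℝ) * x = (p:ℝ) * Real.pi * (((j:ℕ):ℝ) - ((k:ℕ):ℝ)) / N := by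
        rw [hx]; ring
      calc ∑ m : Fin p, (symC N p q)ᴴ j m * symC N p q m k
          = ∑ m : Fin p, Complex.exp (2*((x:ℝ):ℂ)*I*(((m:ℕ):ℂ) - ((p:ℂ)-1)/2)) :=
            Finset.sum_congr rfl fun m _ => hterm m
        _ = Complex.sin ((p:ℂ)*((x:ℝ):ℂ)) / Complex.sin ((x:ℝ):ℂ) := myKey p _ hcsin
        _ = ((Real.sin ((p:ℝ)*x) / Real.sin x : ℝ) : ℂ) := by
            rw [← Complex.ofReal_natCast, ← Complex.ofReal_mul, ← Complex.ofReal_sin,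
              ← Complex.ofReal_sin, ← Complex.ofReal_div]
        _ = ((prolateS N p q j k : ℝ) : ℂ) := by
            simp only [prolateS, if_neg hjk, harg]
            rw [hx]
  refine ⟨hmain, Matrix.isHermitian_conjTranspose_mul_self _, ?_⟩
  intro j k
  rw [hmain, Matrix.map_apply]
  exact ⟨_, rfl⟩
end

section
/- For every integer 1 ≤ p ≤ N, the matrix (1/N)·S(p,N) is an orthogonal projection: S(p,N)² = N·S(p,N) and S(p,N) is symmetric. Moreover its rank equals p (equivalently, trace S(p,N) = pN). -/
open Matrix Complex

lemma aux_sin_eq (θ : ℂ) : Complex.sin θ = ((Complex.exp (θ*I))⁻¹ - Complex.exp (θ*I)) * I / 2 := by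
  rw [Complex.sin, ← Complex.exp_neg]; ring_nf

lemma aux_dirichlet (p : ℕ) (θ : ℂ) (hz : Complex.exp (2*θ*I) ≠ 1) :
    ∑ m : Fin p, Complex.exp ((2*(m:ℕ)+1 - p) * θ * I) = Complex.sin (p*θ) / Complex.sin θ := by
  have ha2 : Complex.exp (θ*I)^2 = Complex.exp (2*θ*I) := by
    rw [show (2:ℂ)*θ*I = ((2:ℕ):ℂ)*(θ*I) by push_cast; ring, Complex.exp_nat_mul]
  have hterm : ∀ m : Fin p,
      Complex.exp ((2*(m:ℕ)+1 - p) * θ * I)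
        = (Complex.exp (θ*I)^2)^(m:ℕ) * (Complex.exp (θ*I) / Complex.exp (θ*I)^p) := by
    intro m
    rw [show ((2*(m:ℕ)+1 - p : ℂ)) * θ * I
        = (m:ℕ)*(2*θ*I) + (θ*I - (p:ℕ)*(θ*I)) by ring,
      Complex.exp_add, Complex.exp_sub, Complex.exp_nat_mul, Complex.exp_nat_mul, ha2]
  have hpθ : Complex.exp ((p:ℂ)*θ*I) = Complex.exp (θ*I)^p := by
    rw [show ((p:ℂ)*θ*I) = (p:ℕ)*(θ*I) by ring, Complex.exp_nat_mul]
  rw [Finset.sum_congr rfl (fun m _ => hterm m), ← Finset.sum_mul,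
    Fin.sum_univ_eq_sum_range (fun m => (Complex.exp (θ*I)^2)^m) p,
    geom_sum_eq (ha2 ▸ hz) p, aux_sin_eq θ, aux_sin_eq ((p:ℂ)*θ), hpθ]
  rw [← ha2] at hz
  generalize hA : Complex.exp (θ*I) = a at *
  have ha0 : a ≠ 0 := hA ▸ Complex.exp_ne_zero _
  have hz2' : a^2 - 1 ≠ 0 := sub_ne_zero.mpr hz
  have hinv : a⁻¹ - a ≠ 0 := by
    intro h
    apply hz
    have h1 : a⁻¹ = a := by linear_combination h
    have := congrArg (· * a) h1
    simpa [inv_mul_cancel₀ ha0, sq] using this.symm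
  have hap : a^p ≠ 0 := pow_ne_zero _ ha0
  have hIne : (I:ℂ) ≠ 0 := Complex.I_ne_zero
  have hd2 : (a⁻¹ - a) * I / 2 ≠ 0 :=
    div_ne_zero (mul_ne_zero hinv hIne) two_ne_zero
  rw [div_mul_div_comm, div_eq_div_iff (mul_ne_zero hz2' hap) hd2]
  field_simp
  ring

lemma aux_exp_ne_one {t : ℝ} (h0 : t ≠ 0) (h1 : |t| < 1) :
    Complex.exp ((2*Real.pi*t : ℝ) * I) ≠ 1 := by
  rw [Ne, Complex.exp_eq_one_iff]
  rintro ⟨n, hn⟩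
  have hI : ((2*Real.pi*t : ℝ) : ℂ) = n * (2*Real.pi) :=
    mul_right_cancel₀ Complex.I_ne_zero (by rw [hn]; ring)
  have hr : (2*Real.pi*t : ℝ) = n * (2*Real.pi) := by exact_mod_cast hI
  have ht : t = n := by
    have h2 : (2*Real.pi) ≠ 0 := by positivity
    apply mul_left_cancel₀ h2
    linear_combination hr
  have : |(n:ℝ)| < 1 := ht ▸ h1
  have hn0 : n ≠ 0 := fun h => h0 (by simp [ht, h])
  have : (1:ℝ) ≤ |(n:ℝ)| := by exact_mod_cast Int.one_le_abs hn0
  linarith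

lemma aux_geom_zero (N : ℕ) (x : ℂ) (hx : Complex.exp x ≠ 1)
    (hxN : Complex.exp ((N:ℂ) * x) = 1) :
    ∑ j : Fin N, Complex.exp ((j:ℕ) * x) = 0 := by
  have h : ∀ j : ℕ, Complex.exp ((j:ℂ) * x) = (Complex.exp x)^j :=
    fun j => Complex.exp_nat_mul x j
  simp_rw [h]
  rw [Fin.sum_univ_eq_sum_range (fun j => (Complex.exp x)^j) N, geom_sum_eq hx,
    ← Complex.exp_nat_mul, hxN, sub_self, zero_div]

lemma aux_conj_exp (x : ℝ) :
    star (Complex.exp ((x:ℝ)*I)) = Complex.exp (-((x:ℂ)*I)) := by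
  rw [show star (Complex.exp ((x:ℝ)*I)) = (starRingEnd ℂ) (Complex.exp ((x:ℝ)*I)) from rfl,
    ← Complex.exp_conj]
  congr 1
  simp

/-- The Fourier matrix used to decompose the prolate matrix. -/
noncomputable def auxF (N p : ℕ) : Matrix (Fin N) (Fin p) ℂ :=
  fun j m => Complex.exp (((2*(m:ℕ)+1-(p:ℝ)) * Real.pi * (j:ℕ) / N : ℝ) * I)

lemma aux_FFH (N p : ℕ) (hN : 0 < N) :
    auxF N p * (auxF N p)ᴴ = (prolateS N p N).map (fun x : ℝ => (x:ℂ)) := by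
  have hNR : (N:ℝ) ≠ 0 := Nat.cast_ne_zero.mpr hN.ne'
  ext j k
  rw [Matrix.mul_apply, Matrix.map_apply, prolateS]
  by_cases hjk : j = k
  · subst hjk
    rw [if_pos rfl]
    have : ∀ m : Fin p, auxF N p j m * (auxF N p)ᴴ m j = 1 := by
      intro m
      rw [Matrix.conjTranspose_apply, auxF, aux_conj_exp, ← Complex.exp_add,
        add_neg_cancel, Complex.exp_zero]
    rw [Finset.sum_congr rfl (fun m _ => this m)]
    simp
  · rw [if_neg hjk]
    set θR : ℝ := Real.pi * (((j:ℕ):ℝ) - ((k:ℕ):ℝ)) / N with hθR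
    set t : ℝ := (((j:ℕ):ℝ) - ((k:ℕ):ℝ)) / N with hts
    have hjkR : ((j:ℕ):ℝ) - ((k:ℕ):ℝ) ≠ 0 := by
      intro h
      apply hjk
      have : ((j:ℕ):ℝ) = ((k:ℕ):ℝ) := by linarith
      exact Fin.ext (Nat.cast_injective this)
    have ht0 : t ≠ 0 := div_ne_zero hjkR hNR
    have ht1 : |t| < 1 := by
      rw [hts, abs_div, abs_of_pos (by exact_mod_cast hN : (0:ℝ) < N), div_lt_one (by exact_mod_cast hN)]
      have h1 : ((j:ℕ):ℝ) < N := by exact_mod_cast j.isLt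
      have h2 : ((k:ℕ):ℝ) < N := by exact_mod_cast k.isLt
      have h3 : (0:ℝ) ≤ ((j:ℕ):ℝ) := by positivity
      have h4 : (0:ℝ) ≤ ((k:ℕ):ℝ) := by positivity
      rw [abs_sub_lt_iff]
      constructor <;> linarith
    have hz : Complex.exp (2*(θR:ℂ)*I) ≠ 1 := by
      have := aux_exp_ne_one ht0 ht1
      convert this using 2
      push_cast [hθR, hts]
      ring
    have hterm : ∀ m : Fin p, auxF N p j m * (auxF N p)ᴴ m k
        = Complex.exp ((2*(m:ℕ)+1 - p) * (θR:ℂ) * I) := by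
      intro m
      simp only [Matrix.conjTranspose_apply, auxF]
      rw [aux_conj_exp, ← Complex.exp_add]
      congr 1
      push_cast [hθR]
      field_simp
      ring
    rw [Finset.sum_congr rfl (fun m _ => hterm m), aux_dirichlet p (θR:ℂ) hz]
    rw [show ((p:ℂ) * (θR:ℂ)) = ((p * θR : ℝ) : ℂ) by push_cast; ring,
      ← Complex.ofReal_sin, ← Complex.ofReal_sin, ← Complex.ofReal_div]
    congr 2
    rw [hθR]; ring

lemma aux_FHF (N p : ℕ) (hN : 0 < N) (hpN : p ≤ N) :
    (auxF N p)ᴴ * auxF N p = (N:ℂ) • 1 := by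
  have hNR : (N:ℝ) ≠ 0 := Nat.cast_ne_zero.mpr hN.ne'
  ext m m'
  rw [Matrix.mul_apply]
  by_cases hmm : m = m'
  · subst hmm
    have : ∀ j : Fin N, (auxF N p)ᴴ m j * auxF N p j m = 1 := by
      intro j
      rw [Matrix.conjTranspose_apply, auxF, aux_conj_exp, ← Complex.exp_add,
        neg_add_cancel, Complex.exp_zero]
    rw [Finset.sum_congr rfl (fun j _ => this j)]
    simp
  · set t : ℝ := (((m':ℕ):ℝ) - ((m:ℕ):ℝ)) / N with hts
    set c : ℂ := ((2*Real.pi*t : ℝ) : ℂ) * I with hc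
    have hmmR : ((m':ℕ):ℝ) - ((m:ℕ):ℝ) ≠ 0 := by
      intro h
      apply hmm
      have : ((m:ℕ):ℝ) = ((m':ℕ):ℝ) := by linarith
      exact Fin.ext (Nat.cast_injective this)
    have ht0 : t ≠ 0 := div_ne_zero hmmR hNR
    have ht1 : |t| < 1 := by
      rw [hts, abs_div, abs_of_pos (by exact_mod_cast hN : (0:ℝ) < N), div_lt_one (by exact_mod_cast hN)]
      have h1 : ((m:ℕ):ℝ) < N := by
        have := m.isLt
        have : (m:ℕ) < N := lt_of_lt_of_le this hpN
        exact_mod_cast this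
      have h2 : ((m':ℕ):ℝ) < N := by
        have := m'.isLt
        have : (m':ℕ) < N := lt_of_lt_of_le this hpN
        exact_mod_cast this
      have h3 : (0:ℝ) ≤ ((m:ℕ):ℝ) := by positivity
      have h4 : (0:ℝ) ≤ ((m':ℕ):ℝ) := by positivity
      rw [abs_sub_lt_iff]
      constructor <;> linarith
    have hx : Complex.exp c ≠ 1 := aux_exp_ne_one ht0 ht1
    have hxN : Complex.exp ((N:ℂ) * c) = 1 := by
      have hh : (N:ℂ) * c = ((((m':ℕ):ℤ) - ((m:ℕ):ℤ) : ℤ) : ℂ) * (2*(Real.pi:ℂ)*I) := by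
        rw [hc, hts]
        have hNC : (N:ℂ) ≠ 0 := Nat.cast_ne_zero.mpr hN.ne'
        push_cast
        field_simp
      rw [hh, Complex.exp_int_mul_two_pi_mul_I]
    have hterm : ∀ j : Fin N, (auxF N p)ᴴ m j * auxF N p j m'
        = Complex.exp ((j:ℕ) * c) := by
      intro j
      simp only [Matrix.conjTranspose_apply, auxF]
      rw [aux_conj_exp, ← Complex.exp_add]
      congr 1
      push_cast [hc, hts]
      field_simp
      ring
    rw [Finset.sum_congr rfl (fun j _ => hterm j), aux_geom_zero N c hx hxN]
    simp [Matrix.one_apply, hmm]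

/-- `(1/N)·S(p,N)` is an orthogonal projection: `S(p,N)² = N·S(p,N)` and `S(p,N)` is
symmetric; moreover its rank equals `p` (equivalently `trace S(p,N) = pN`). -/
theorem prolateS_q_eq_N_projection
    (N p : ℕ) (hN : 0 < N) (hp1 : 1 ≤ p) (hpN : p ≤ N) :
    prolateS N p N * prolateS N p N = (N : ℝ) • prolateS N p N ∧
    (prolateS N p N).IsSymm ∧
    (prolateS N p N).rank = p ∧
    (prolateS N p N).trace = (p : ℝ) * N := by
  set S := prolateS N p N with hS
  -- the projection identity
  have hmapS : S.map (fun x : ℝ => (x:ℂ)) = auxF N p * (auxF N p)ᴴ := (aux_FFH N p hN).symm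
  have hsmulmap : ((N:ℝ) • S).map (fun x : ℝ => (x:ℂ)) = (N:ℂ) • S.map (fun x : ℝ => (x:ℂ)) := by
    ext j k
    simp [Matrix.map_apply, Matrix.smul_apply]
  have hmul : S * S = (N:ℝ) • S := by
    have h1 : (S * S).map (fun x : ℝ => (x:ℂ)) = ((N:ℝ) • S).map (fun x : ℝ => (x:ℂ)) := by
      have hfh : (fun x : ℝ => (x:ℂ)) = ⇑Complex.ofRealHom := rfl
      rw [hfh] at hmapS hsmulmap ⊢
      rw [Matrix.map_mul, hmapS, hsmulmap, hmapS]
      rw [Matrix.mul_assoc, ← Matrix.mul_assoc ((auxF N p)ᴴ), aux_FHF N p hN hpN]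
      rw [Matrix.smul_mul, Matrix.one_mul, Matrix.mul_smul]
    ext j k
    have h2 := congrFun (congrFun h1 j) k
    simp only [Matrix.map_apply] at h2
    exact_mod_cast h2
  -- symmetry
  have hsym : S.IsSymm := by
    ext j k
    simp only [hS, Matrix.transpose_apply, prolateS]
    by_cases hjk : j = k
    · subst hjk; rfl
    · rw [if_neg hjk, if_neg (fun h => hjk (h.symm))]
      rw [show ((j:ℕ):ℝ) - ((k:ℕ):ℝ) = -(((k:ℕ):ℝ) - ((j:ℕ):ℝ)) by ring,
        show (p:ℝ) * Real.pi * -(((k:ℕ):ℝ) - ((j:ℕ):ℝ)) / N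
          = -((p:ℝ) * Real.pi * (((k:ℕ):ℝ) - ((j:ℕ):ℝ)) / N) by ring,
        show Real.pi * -(((k:ℕ):ℝ) - ((j:ℕ):ℝ)) / N
          = -(Real.pi * (((k:ℕ):ℝ) - ((j:ℕ):ℝ)) / N) by ring,
        Real.sin_neg, Real.sin_neg, neg_div_neg_eq]
  -- trace
  have htrace : S.trace = (p:ℝ) * N := by
    rw [Matrix.trace]
    have : ∀ j : Fin N, S.diag j = (p:ℝ) := by
      intro j; rw [Matrix.diag_apply, hS, prolateS, if_pos rfl]
    rw [Finset.sum_congr rfl (fun j _ => this j), Finset.sum_const, Finset.card_univ,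
      Fintype.card_fin, nsmul_eq_mul]
    ring
  refine ⟨hmul, hsym, ?_, htrace⟩
  -- rank
  have hA : S.IsHermitian := by
    rw [Matrix.IsHermitian]
    rw [show S.conjTranspose = S.transpose from rfl]
    exact hsym
  -- eigenvalues are 0 or N
  have heig : ∀ i, hA.eigenvalues i = 0 ∨ hA.eigenvalues i = N := by
    intro i
    have hv := hA.mulVec_eigenvectorBasis i
    set v := (hA.eigenvectorBasis i).ofLp with hvdef
    set lam := hA.eigenvalues i with hlam
    have hv2 : (S * S) *ᵥ v = (lam * lam) • v := by
      rw [← Matrix.mulVec_mulVec, hv, Matrix.mulVec_smul, hv, smul_smul]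
    rw [hmul, Matrix.smul_mulVec, hv, smul_smul] at hv2
    have hvne : v ≠ 0 := by
      intro h
      have := (hA.eigenvectorBasis).orthonormal.ne_zero i
      apply this
      ext l
      exact congrFun h l
    obtain ⟨l, hl⟩ : ∃ l, v l ≠ 0 := by
      by_contra h
      push_neg at h
      exact hvne (funext h)
    have h3 := congrFun hv2 l
    simp only [Pi.smul_apply, smul_eq_mul] at h3
    have h4 : lam * lam = (N:ℝ) * lam := (mul_right_cancel₀ hl h3).symm
    have h5 : lam * (lam - N) = 0 := by linear_combination h4
    rcases mul_eq_zero.mp h5 with h | h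
    · exact Or.inl h
    · exact Or.inr (by linarith)
  classical
  have hrank := hA.rank_eq_card_non_zero_eigs
  have htr2 : S.trace = ∑ i, hA.eigenvalues i := by
    conv_lhs => rw [hA.spectral_theorem, Unitary.conjStarAlgAut_apply]
    rw [Matrix.trace_mul_cycle,
      show (star (Matrix.IsHermitian.eigenvectorUnitary hA : Matrix (Fin N) (Fin N) ℝ)) *
        (Matrix.IsHermitian.eigenvectorUnitary hA : Matrix (Fin N) (Fin N) ℝ) = 1 from
        Unitary.coe_star_mul_self _,
      Matrix.one_mul, Matrix.trace_diagonal]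
    simp
  have hsum : ∑ i, hA.eigenvalues i
      = (N:ℝ) * (Fintype.card {i // hA.eigenvalues i ≠ 0}) := by
    rw [Fintype.card_subtype,
      ← Finset.sum_filter_add_sum_filter_not Finset.univ (fun i => hA.eigenvalues i ≠ 0)]
    have h0 : ∑ i ∈ Finset.univ.filter (fun i => ¬ hA.eigenvalues i ≠ 0), hA.eigenvalues i = 0 := by
      apply Finset.sum_eq_zero
      intro i hi
      simp only [Finset.mem_filter, not_not] at hi
      exact hi.2
    have h1 : ∑ i ∈ Finset.univ.filter (fun i => hA.eigenvalues i ≠ 0), hA.eigenvalues i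
        = ∑ _i ∈ Finset.univ.filter (fun i => hA.eigenvalues i ≠ 0), (N:ℝ) := by
      apply Finset.sum_congr rfl
      intro i hi
      simp only [Finset.mem_filter] at hi
      rcases heig i with h | h
      · exact absurd h hi.2
      · exact h
    rw [h0, h1, Finset.sum_const, nsmul_eq_mul, add_zero, mul_comm]
  have hNR : (N:ℝ) ≠ 0 := Nat.cast_ne_zero.mpr hN.ne'
  have hfinal : (p:ℝ) = (Fintype.card {i // hA.eigenvalues i ≠ 0} : ℝ) := by
    have h := htrace.symm.trans (htr2.trans hsum)
    have h2 : (p:ℝ) * N = (Fintype.card {i // hA.eigenvalues i ≠ 0} : ℝ) * N := by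
      linear_combination h
    exact mul_right_cancel₀ hNR h2
  rw [hrank]
  exact_mod_cast hfinal.symm
end
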